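/- For every natural number α there exist polynomials P and Q with rational coefficients such that for every natural number n, (∏_{j=0}^{α} (2n − 2j − 1)) · (∑_{0 ≤ i ≤ n, i even} i^{2α+1} · C(2n, n−i)) = C(2n, n) · P(n) and (∏_{j=0}^{α} (2n − 2j − 1)) · (∑_{0 ≤ i ≤ n, i odd} i^{2α+1} · C(2n, n−i)) = C(2n, n) · Q(n), where both sides are viewed as rational numbers and the factors 2n − 2j − 1 are computed in the integers. -/

import Mathlib

open Finset
/-- integer-indexed binomial coefficient with rational values -/
def cc (N : ℕ) (k : ℤ) : ℚ := if 0 ≤ k then (N.choose k.toNat : ℚ) else 0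

lemma cc_natCast (N k : ℕ) : cc N (k : ℤ) = N.choose k := by simp [cc]

lemma cc_neg (N : ℕ) {k : ℤ} (h : k < 0) : cc N k = 0 := by simp [cc, not_le.2 h]

lemma cc_pascal (N : ℕ) (k : ℤ) : cc (N+1) k = cc N (k-1) + cc N k := by
  rcases lt_trichotomy k 0 with h | rfl | h
  · rw [cc_neg _ h, cc_neg _ (by omega), cc_neg _ (by omega)]; ring
  · simp [cc]
  · obtain ⟨m, rfl⟩ : ∃ m : ℕ, k = (m : ℤ) + 1 := ⟨(k-1).toNat, by omega⟩
    have h1 : ((m : ℤ) + 1) = ((m+1 : ℕ) : ℤ) := by push_cast; ring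
    have h2 : (((m+1 : ℕ) : ℤ) - 1) = ((m : ℕ) : ℤ) := by push_cast; ring
    rw [h1, h2, cc_natCast, cc_natCast, cc_natCast, Nat.choose_succ_succ']
    push_cast; ring

lemma N1 (m i : ℕ) (h : i ≤ m) :
    (m+1-i) * Nat.choose (2*m+2) (m+1-i) = (2*m+2) * Nat.choose (2*m+1) (m-i) := by
  have h1 : m + 1 - i = (m - i) + 1 := by omega
  have := Nat.add_one_mul_choose_eq (2*m+1) (m-i)
  have h2 : 2*m+1+1 = 2*m+2 := by omega
  rw [h2] at this
  rw [h1, this]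
  have h3 : m - i + 1 = m - i + 1 := rfl
  rw [h3]; ring

lemma N2 (m i : ℕ) (h : i ≤ m) :
    (m+1+i) * Nat.choose (2*m+1) (m-i) = (2*m+1) * Nat.choose (2*m) (m-i) := by
  have s1 : Nat.choose (2*m+1) (m-i) = Nat.choose (2*m+1) (m+1+i) := by
    rw [← Nat.choose_symm (show m+1+i ≤ 2*m+1 by omega)]
    congr 1; omega
  have s2 : Nat.choose (2*m) (m+i) = Nat.choose (2*m) (m-i) := by
    rw [← Nat.choose_symm (show m+i ≤ 2*m by omega)]
    congr 1; omega
  have := Nat.add_one_mul_choose_eq (2*m) (m+i)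
  have h2 : 2*m+1 = 2*m+1 := rfl
  have h3 : m+i+1 = m+1+i := by omega
  rw [h2, h3, s2] at this
  rw [s1, this]; ring

lemma K1 (m i : ℕ) :
    (i:ℚ)^2 * cc (2*m+2) ((m:ℤ)+1-i)
      = ((m:ℚ)+1)^2 * cc (2*m+2) ((m:ℤ)+1-i)
        - 2*((m:ℚ)+1)*(2*(m:ℚ)+1) * cc (2*m) ((m:ℤ)-i) := by
  rcases Nat.lt_or_ge m i with hi | hi
  · rcases Nat.lt_or_ge (m+1) i with hii | hii
    · rw [cc_neg _ (by omega : ((m:ℤ)+1-i) < 0), cc_neg _ (by omega : ((m:ℤ)-i) < 0)]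
      have : i = m + 1 ∨ m + 2 ≤ i := by omega
      ring
    · have hieq : i = m + 1 := by omega
      subst hieq
      have h0 : ((m:ℤ)+1-(m+1:ℕ)) = ((0:ℕ):ℤ) := by push_cast; ring
      rw [h0, cc_natCast, cc_neg _ (by push_cast; omega : ((m:ℤ)-(m+1:ℕ)) < 0)]
      push_cast; ring
  · -- i ≤ m
    have h1 : ((m:ℤ)+1-i) = ((m+1-i : ℕ):ℤ) := by push_cast [Nat.cast_sub (by omega : i ≤ m+1)]; ring
    have h2 : ((m:ℤ)-i) = ((m-i : ℕ):ℤ) := by push_cast [Nat.cast_sub hi]; ring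
    rw [h1, h2, cc_natCast, cc_natCast]
    have e1 := congrArg (Nat.cast : ℕ → ℚ) (N1 m i hi)
    have e2 := congrArg (Nat.cast : ℕ → ℚ) (N2 m i hi)
    push_cast [Nat.cast_sub (by omega : i ≤ m+1)] at e1 e2
    linear_combination (-((m:ℚ)+1+i))*e1 - (2*(m:ℚ)+2)*e2

lemma K2 (m i : ℕ) :
    (i:ℚ) * cc (2*m+2) ((m:ℤ)+1-i)
      = ((m:ℚ)+1) * (cc (2*m+1) ((m:ℤ)+1-i) - cc (2*m+1) ((m:ℤ)-i)) := by
  rcases Nat.lt_or_ge m i with hi | hi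
  · rcases Nat.lt_or_ge (m+1) i with hii | hii
    · rw [cc_neg _ (by omega : ((m:ℤ)+1-i) < 0), cc_neg _ (by omega : ((m:ℤ)-i) < 0),
        cc_neg _ (by omega : ((m:ℤ)+1-i) < 0)]
      ring
    · have hieq : i = m + 1 := by omega
      subst hieq
      have h0 : ((m:ℤ)+1-(m+1:ℕ)) = ((0:ℕ):ℤ) := by push_cast; ring
      rw [h0, cc_natCast, cc_natCast, cc_neg _ (by push_cast; omega : ((m:ℤ)-(m+1:ℕ)) < 0)]
      simp
  · have h1 : ((m:ℤ)+1-i) = ((m+1-i : ℕ):ℤ) := by push_cast [Nat.cast_sub (by omega : i ≤ m+1)]; ring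
    have h2 : ((m:ℤ)-i) = ((m-i : ℕ):ℤ) := by push_cast [Nat.cast_sub hi]; ring
    rw [h1, h2, cc_natCast, cc_natCast, cc_natCast]
    have e1 := congrArg (Nat.cast : ℕ → ℚ) (N1 m i hi)
    have epas : Nat.choose (2*m+2) (m+1-i) = Nat.choose (2*m+1) (m-i) + Nat.choose (2*m+1) (m+1-i) := by
      have h3 : m + 1 - i = (m - i) + 1 := by omega
      rw [h3, Nat.choose_succ_succ']
    have e2 := congrArg (Nat.cast : ℕ → ℚ) epas
    push_cast [Nat.cast_sub (by omega : i ≤ m+1)] at e1 e2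
    linear_combination ((m:ℚ)+1)*e2 - e1

lemma step_sum (w : ℕ → ℚ) (m : ℕ) :
    ∑ i ∈ range (m+2), ((i:ℚ)^2 * w i) * cc (2*m+2) ((m:ℤ)+1-i)
      = ((m:ℚ)+1)^2 * ∑ i ∈ range (m+2), w i * cc (2*m+2) ((m:ℤ)+1-i)
        - 2*((m:ℚ)+1)*(2*(m:ℚ)+1) * ∑ i ∈ range (m+1), w i * cc (2*m) ((m:ℤ)-i) := by
  have hext : ∑ i ∈ range (m+2), w i * cc (2*m) ((m:ℤ)-i)
      = ∑ i ∈ range (m+1), w i * cc (2*m) ((m:ℤ)-i) := by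
    rw [Finset.sum_range_succ, cc_neg _ (by push_cast; omega : ((m:ℤ)-((m+1:ℕ):ℤ)) < 0)]
    ring
  rw [← hext, Finset.mul_sum, Finset.mul_sum, ← Finset.sum_sub_distrib]
  exact Finset.sum_congr rfl fun i _ => by linear_combination (w i) * K1 m i

lemma T_closed (m : ℕ) :
    ∑ i ∈ range (m+3), (i:ℚ) * cc (2*m+2) ((m:ℤ)+1-i)
      = ((m:ℚ)+1) * cc (2*m+1) ((m:ℤ)+1) := by
  have key : ∀ i : ℕ, (i:ℚ) * cc (2*m+2) ((m:ℤ)+1-i)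
      = ((m:ℚ)+1) * (cc (2*m+1) ((m:ℤ)+1-(i:ℤ)) - cc (2*m+1) ((m:ℤ)+1-((i+1:ℕ):ℤ))) := by
    intro i
    have h : ((m:ℤ)+1-((i+1:ℕ):ℤ)) = (m:ℤ)-i := by push_cast; ring
    rw [h]; exact K2 m i
  calc ∑ i ∈ range (m+3), (i:ℚ) * cc (2*m+2) ((m:ℤ)+1-i)
      = ∑ i ∈ range (m+3), ((m:ℚ)+1) * ((fun j : ℕ => cc (2*m+1) ((m:ℤ)+1-(j:ℤ))) i
          - (fun j : ℕ => cc (2*m+1) ((m:ℤ)+1-(j:ℤ))) (i+1)) :=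
        Finset.sum_congr rfl fun i _ => key i
    _ = ((m:ℚ)+1) * ∑ i ∈ range (m+3), ((fun j : ℕ => cc (2*m+1) ((m:ℤ)+1-(j:ℤ))) i
          - (fun j : ℕ => cc (2*m+1) ((m:ℤ)+1-(j:ℤ))) (i+1)) := by rw [Finset.mul_sum]
    _ = ((m:ℚ)+1) * (cc (2*m+1) ((m:ℤ)+1-((0:ℕ):ℤ)) - cc (2*m+1) ((m:ℤ)+1-((m+3:ℕ):ℤ))) := by
        rw [Finset.sum_range_sub' (fun j : ℕ => cc (2*m+1) ((m:ℤ)+1-(j:ℤ))) (m+3)]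
    _ = ((m:ℚ)+1) * cc (2*m+1) ((m:ℤ)+1) := by
        rw [cc_neg _ (by push_cast; omega : ((m:ℤ)+1-((m+3:ℕ):ℤ)) < 0)]
        norm_num

lemma H_closed (m : ℕ) :
    ∑ i ∈ range (m+3), (-1:ℚ)^i * cc (2*m+1) ((m:ℤ)+1-i)
      = cc (2*m) ((m:ℤ)+1) := by
  have key : ∀ i : ℕ, (-1:ℚ)^i * cc (2*m+1) ((m:ℤ)+1-i)
      = ((fun j : ℕ => (-1:ℚ)^j * cc (2*m) ((m:ℤ)+1-(j:ℤ))) i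
          - (fun j : ℕ => (-1:ℚ)^j * cc (2*m) ((m:ℤ)+1-(j:ℤ))) (i+1)) := by
    intro i
    have h : ((m:ℤ)+1-((i+1:ℕ):ℤ)) = ((m:ℤ)+1-(i:ℤ))-1 := by push_cast; ring
    have hp := cc_pascal (2*m) ((m:ℤ)+1-(i:ℤ))
    simp only [h, pow_succ]
    rw [hp]; ring
  rw [Finset.sum_congr rfl fun i _ => key i,
    Finset.sum_range_sub' (fun j : ℕ => (-1:ℚ)^j * cc (2*m) ((m:ℤ)+1-(j:ℤ))) (m+3),
    cc_neg _ (by push_cast; omega : ((m:ℤ)+1-((m+3:ℕ):ℤ)) < 0)]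
  norm_num

lemma A_closed (m : ℕ) :
    ∑ i ∈ range (m+3), (-1:ℚ)^i * (i:ℚ) * cc (2*m+2) ((m:ℤ)+1-i)
      = ((m:ℚ)+1) * (2 * cc (2*m) ((m:ℤ)+1) - cc (2*m+1) ((m:ℤ)+1)) := by
  set h : ℕ → ℚ := fun j => (-1:ℚ)^j * cc (2*m+1) ((m:ℤ)+1-(j:ℤ)) with hh
  have key : ∀ i : ℕ, (-1:ℚ)^i * (i:ℚ) * cc (2*m+2) ((m:ℤ)+1-i)
      = ((m:ℚ)+1) * (h i + h (i+1)) := by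
    intro i
    have hc : ((m:ℤ)+1-((i+1:ℕ):ℤ)) = (m:ℤ)-i := by push_cast; ring
    have := K2 m i
    simp only [hh, hc, pow_succ]
    linear_combination ((-1:ℚ)^i) * this
  rw [Finset.sum_congr rfl fun i _ => key i, ← Finset.mul_sum]
  have hsplit : ∑ i ∈ range (m+3), (h i + h (i+1))
      = ∑ i ∈ range (m+3), h i + ∑ i ∈ range (m+3), h (i+1) := Finset.sum_add_distrib
  have hshift : ∑ i ∈ range (m+3), h (i+1)
      = ∑ i ∈ range (m+3), h i + h (m+3) - h 0 := by
    have := Finset.sum_range_succ' h (m+3)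
    have h2 := Finset.sum_range_succ h (m+3)
    rw [h2] at this
    linarith [this]
  have hend : h (m+3) = 0 := by
    simp only [hh]
    rw [cc_neg _ (by push_cast; omega : ((m:ℤ)+1-((m+3:ℕ):ℤ)) < 0)]
    ring
  have h0 : h 0 = cc (2*m+1) ((m:ℤ)+1) := by simp [hh]
  have hH : ∑ i ∈ range (m+3), h i = cc (2*m) ((m:ℤ)+1) := by
    rw [hh]; exact H_closed m
  rw [hsplit, hshift, hend, h0, hH]
  ring

lemma F1 (m : ℕ) : Nat.choose (2*m+2) (m+1) = 2 * Nat.choose (2*m+1) (m+1) := by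
  have hp : Nat.choose (2*m+2) (m+1) = Nat.choose (2*m+1) m + Nat.choose (2*m+1) (m+1) := by
    have := Nat.choose_succ_succ' (2*m+1) m
    simpa [show 2*m+1+1 = 2*m+2 by ring] using this
  have hs : Nat.choose (2*m+1) m = Nat.choose (2*m+1) (m+1) := by
    have := Nat.choose_symm (show m+1 ≤ 2*m+1 by omega)
    simpa [show 2*m+1-(m+1) = m by omega] using this
  omega

lemma F2 (m : ℕ) : 2*(2*m+1) * Nat.choose (2*m) (m+1) = m * Nat.choose (2*m+2) (m+1) := by
  rcases Nat.eq_zero_or_pos m with rfl | hm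
  · simp
  · have hs : Nat.choose (2*m) (m+1) = Nat.choose (2*m) (m-1) := by
      have := Nat.choose_symm (show m+1 ≤ 2*m by omega)
      simpa [show 2*m-(m+1) = m-1 by omega] using this.symm
    have he := Nat.add_one_mul_choose_eq (2*m) (m-1)
    have h1 : 2*m+1 = 2*m+1 := rfl
    have h2 : m-1+1 = m := by omega
    rw [h1, h2] at he
    have hs2 : Nat.choose (2*m+1) m = Nat.choose (2*m+1) (m+1) := by
      have := Nat.choose_symm (show m+1 ≤ 2*m+1 by omega)
      simpa [show 2*m+1-(m+1) = m by omega] using this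
    rw [hs, F1, ← hs2]
    calc 2*(2*m+1) * Nat.choose (2*m) (m-1) = 2*((2*m+1) * Nat.choose (2*m) (m-1)) := by ring
      _ = 2*(Nat.choose (2*m+1) m * m) := by rw [he]
      _ = m * (2 * Nat.choose (2*m+1) m) := by ring

lemma F3 (m : ℕ) : 2*(2*m+1) * Nat.choose (2*m) m = (m+1) * Nat.choose (2*m+2) (m+1) := by
  have he := Nat.add_one_mul_choose_eq (2*m) m
  have h1 : 2*m+1 = 2*m+1 := rfl
  have h2 : m+1 = m+1 := rfl
  rw [h1, h2] at he
  rw [F1]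
  calc 2*(2*m+1) * Nat.choose (2*m) m = 2*((2*m+1) * Nat.choose (2*m) m) := by ring
    _ = 2*(Nat.choose (2*m+1) (m+1) * (m+1)) := by rw [he]
    _ = (m+1) * (2 * Nat.choose (2*m+1) (m+1)) := by ring

lemma base_even (n : ℕ) :
    (2*(n:ℚ)-1) * (∑ i ∈ range (n+1), (if Even i then (i:ℚ) else 0) * cc (2*n) ((n:ℤ)-i))
      = (Nat.choose (2*n) n : ℚ) * (((n:ℚ)^2 - (n:ℚ))/2) := by
  rcases n with _ | m
  · simp
  · have hcast1 : (((m+1:ℕ):ℤ)) = (m:ℤ)+1 := by push_cast; ring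
    have h2n : 2*(m+1) = 2*m+2 := by ring
    rw [h2n, hcast1]
    have hext : ∑ i ∈ range (m+3), (if Even i then (i:ℚ) else 0) * cc (2*m+2) ((m:ℤ)+1-i)
        = ∑ i ∈ range (m+2), (if Even i then (i:ℚ) else 0) * cc (2*m+2) ((m:ℤ)+1-i) := by
      rw [Finset.sum_range_succ, cc_neg _ (by push_cast; omega : ((m:ℤ)+1-((m+2:ℕ):ℤ)) < 0)]
      ring
    rw [← hext]
    have hterm : ∀ i ∈ range (m+3), (if Even i then (i:ℚ) else 0) * cc (2*m+2) ((m:ℤ)+1-i)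
        = (1/2) * ((i:ℚ) * cc (2*m+2) ((m:ℤ)+1-i))
          + (1/2) * ((-1:ℚ)^i * (i:ℚ) * cc (2*m+2) ((m:ℤ)+1-i)) := by
      intro i _
      rcases Nat.even_or_odd i with he | ho
      · rw [if_pos he, he.neg_one_pow]; ring
      · rw [if_neg (by simpa [Nat.not_even_iff_odd] using ho), ho.neg_one_pow]; ring
    rw [Finset.sum_congr rfl hterm, Finset.sum_add_distrib, ← Finset.mul_sum, ← Finset.mul_sum,
      T_closed, A_closed]
    have hb : cc (2*m+1) ((m:ℤ)+1) = (Nat.choose (2*m+1) (m+1) : ℚ) := by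
      rw [show ((m:ℤ)+1) = ((m+1:ℕ):ℤ) by push_cast; ring, cc_natCast]
    have hg : cc (2*m) ((m:ℤ)+1) = (Nat.choose (2*m) (m+1) : ℚ) := by
      rw [show ((m:ℤ)+1) = ((m+1:ℕ):ℤ) by push_cast; ring, cc_natCast]
    rw [hb, hg]
    have f2 := congrArg (Nat.cast : ℕ → ℚ) (F2 m)
    push_cast at f2 ⊢
    linear_combination (((m:ℚ)+1)/2) * f2

lemma base_odd (n : ℕ) :
    (2*(n:ℚ)-1) * (∑ i ∈ range (n+1), (if Odd i then (i:ℚ) else 0) * cc (2*n) ((n:ℤ)-i))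
      = (Nat.choose (2*n) n : ℚ) * ((n:ℚ)^2/2) := by
  rcases n with _ | m
  · simp
  · have hcast1 : (((m+1:ℕ):ℤ)) = (m:ℤ)+1 := by push_cast; ring
    have h2n : 2*(m+1) = 2*m+2 := by ring
    rw [h2n, hcast1]
    have hext : ∑ i ∈ range (m+3), (if Odd i then (i:ℚ) else 0) * cc (2*m+2) ((m:ℤ)+1-i)
        = ∑ i ∈ range (m+2), (if Odd i then (i:ℚ) else 0) * cc (2*m+2) ((m:ℤ)+1-i) := by
      rw [Finset.sum_range_succ, cc_neg _ (by push_cast; omega : ((m:ℤ)+1-((m+2:ℕ):ℤ)) < 0)]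
      ring
    rw [← hext]
    have hterm : ∀ i ∈ range (m+3), (if Odd i then (i:ℚ) else 0) * cc (2*m+2) ((m:ℤ)+1-i)
        = (1/2) * ((i:ℚ) * cc (2*m+2) ((m:ℤ)+1-i))
          - (1/2) * ((-1:ℚ)^i * (i:ℚ) * cc (2*m+2) ((m:ℤ)+1-i)) := by
      intro i _
      rcases Nat.even_or_odd i with he | ho
      · rw [if_neg (by simpa [Nat.not_odd_iff_even] using he), he.neg_one_pow]; ring
      · rw [if_pos ho, ho.neg_one_pow]; ring
    rw [Finset.sum_congr rfl hterm, Finset.sum_sub_distrib, ← Finset.mul_sum, ← Finset.mul_sum,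
      T_closed, A_closed]
    have hb : cc (2*m+1) ((m:ℤ)+1) = (Nat.choose (2*m+1) (m+1) : ℚ) := by
      rw [show ((m:ℤ)+1) = ((m+1:ℕ):ℤ) by push_cast; ring, cc_natCast]
    have hg : cc (2*m) ((m:ℤ)+1) = (Nat.choose (2*m) (m+1) : ℚ) := by
      rw [show ((m:ℤ)+1) = ((m+1:ℕ):ℤ) by push_cast; ring, cc_natCast]
    rw [hb, hg]
    have f1 := congrArg (Nat.cast : ℕ → ℚ) (F1 m)
    have f2 := congrArg (Nat.cast : ℕ → ℚ) (F2 m)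
    push_cast at f1 f2 ⊢
    linear_combination (-(((m:ℚ)+1)*(2*(m:ℚ)+1)/2)) * f1 - (((m:ℚ)+1)/2) * f2

lemma main_lemma (w : ℕ → ℚ) (P0 : Polynomial ℚ)
    (hbase : ∀ n : ℕ, (2*(n:ℚ)-1) * (∑ i ∈ range (n+1), w i * cc (2*n) ((n:ℤ)-i))
      = (Nat.choose (2*n) n : ℚ) * P0.eval (n:ℚ)) :
    ∀ α : ℕ, ∃ P : Polynomial ℚ, ∀ n : ℕ,
      (((∏ j ∈ range (α+1), (2*(n:ℤ) - 2*(j:ℤ) - 1)) : ℤ) : ℚ)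
          * (∑ i ∈ range (n+1), (i:ℚ)^(2*α) * w i * cc (2*n) ((n:ℤ)-i))
        = (Nat.choose (2*n) n : ℚ) * P.eval (n:ℚ) := by
  intro α
  induction α with
  | zero =>
    refine ⟨P0, fun n => ?_⟩
    have hs : ∑ i ∈ range (n+1), (i:ℚ)^(2*0) * w i * cc (2*n) ((n:ℤ)-i)
        = ∑ i ∈ range (n+1), w i * cc (2*n) ((n:ℤ)-i) :=
      Finset.sum_congr rfl (fun i _ => by norm_num)
    rw [hs, Finset.prod_range_one]
    push_cast
    linear_combination hbase n
  | succ α ih =>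
    obtain ⟨P, hP⟩ := ih
    refine ⟨Polynomial.X^2 * ((2*Polynomial.X - Polynomial.C (2*(α:ℚ)+3)) * P
      - (2*Polynomial.X - 1) * (P.comp (Polynomial.X - 1))), fun n => ?_⟩
    rcases Nat.eq_zero_or_pos n with rfl | hn
    · simp [zero_pow (by omega : 2*(α+1) ≠ 0)]
    · obtain ⟨m, rfl⟩ : ∃ m, n = m + 1 := ⟨n-1, by omega⟩
      have hstep := step_sum (fun i => (i:ℚ)^(2*α) * w i) m
      have e1 := hP (m+1)
      have e2 := hP m
      have f3 := congrArg (Nat.cast : ℕ → ℚ) (F3 m)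
      -- normalize
      simp only [show 2*(m+1) = 2*m+2 from by ring, show m+1+1 = m+2 from by ring] at e1 ⊢
      push_cast at e1 e2 f3 ⊢
      -- rewrite the sum
      have hsum : ∑ i ∈ range (m+2), (i:ℚ)^(2*(α+1)) * w i * cc (2*m+2) ((m:ℤ)+1-(i:ℤ))
          = ∑ i ∈ range (m+2), ((i:ℚ)^2 * ((i:ℚ)^(2*α) * w i)) * cc (2*m+2) ((m:ℤ)+1-(i:ℤ)) :=
        Finset.sum_congr rfl (fun i _ => by
          rw [show 2*(α+1) = 2+2*α from by ring, pow_add]; ring)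
      rw [hsum, hstep]
      -- product identity in ℚ
      have e3 : (2*(m:ℚ)-2*α-1) * ∏ j ∈ range (α+1), (2*((m:ℚ)+1) - 2*(j:ℚ) - 1)
          = (2*(m:ℚ)+1) * ∏ j ∈ range (α+1), (2*(m:ℚ) - 2*(j:ℚ) - 1) := by
        have h1 := Finset.prod_range_succ' (fun j : ℕ => (2*((m:ℚ)+1) - 2*(j:ℚ) - 1)) (α+1)
        have h2 := Finset.prod_range_succ (fun j : ℕ => (2*((m:ℚ)+1) - 2*(j:ℚ) - 1)) (α+1)
        have h3 : ∏ j ∈ range (α+1), (2*((m:ℚ)+1) - 2*((j:ℚ)+1) - 1)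
            = ∏ j ∈ range (α+1), (2*(m:ℚ) - 2*(j:ℚ) - 1) :=
          Finset.prod_congr rfl (fun j _ => by push_cast; ring)
        push_cast at h1 h2
        rw [h3] at h1
        rw [h1] at h2
        linear_combination -h2
      -- product split in ℚ
      have hprod := Finset.prod_range_succ (fun j : ℕ => (2*((m:ℚ)+1) - 2*(j:ℚ) - 1)) (α+1)
      push_cast at hprod
      rw [hprod]
      simp only [Polynomial.eval_mul, Polynomial.eval_sub, Polynomial.eval_pow,
        Polynomial.eval_add, Polynomial.eval_comp, Polynomial.eval_X, Polynomial.eval_C,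
        Polynomial.eval_one, Polynomial.eval_ofNat]
      rw [show ((m:ℚ)+1-1) = (m:ℚ) from by ring]
      linear_combination (((m:ℚ)+1)^2*(2*(m:ℚ)-2*(α:ℚ)-1)) * e1
        - (2*((m:ℚ)+1)*(2*(m:ℚ)+1)*(∑ i ∈ range (m+1), (i:ℚ)^(2*α) * w i * cc (2*m) ((m:ℤ)-(i:ℤ)))) * e3
        - (2*((m:ℚ)+1)*(2*(m:ℚ)+1)^2) * e2
        - (((m:ℚ)+1)*(2*(m:ℚ)+1)*(Polynomial.eval (m:ℚ) P)) * f3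


theorem stmt_0 (α : ℕ) :
    ∃ P Q : Polynomial ℚ,
      ∀ n : ℕ,
        (((∏ j ∈ Finset.range (α + 1), (2 * (n : ℤ) - 2 * (j : ℤ) - 1)) : ℤ) : ℚ) *
            (∑ i ∈ (Finset.range (n + 1)).filter (fun i => Even i),
              (i : ℚ) ^ (2 * α + 1) * (Nat.choose (2 * n) (n - i) : ℚ))
          = (Nat.choose (2 * n) n : ℚ) * P.eval (n : ℚ) ∧
        (((∏ j ∈ Finset.range (α + 1), (2 * (n : ℤ) - 2 * (j : ℤ) - 1)) : ℤ) : ℚ) *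
            (∑ i ∈ (Finset.range (n + 1)).filter (fun i => Odd i),
              (i : ℚ) ^ (2 * α + 1) * (Nat.choose (2 * n) (n - i) : ℚ))
          = (Nat.choose (2 * n) n : ℚ) * Q.eval (n : ℚ) := by
  obtain ⟨P, hP⟩ := main_lemma (fun i => if Even i then (i:ℚ) else 0)
    (Polynomial.C (1/2 : ℚ) * (Polynomial.X^2 - Polynomial.X))
    (fun n => by
      have h := base_even n
      simp only [Polynomial.eval_mul, Polynomial.eval_sub, Polynomial.eval_pow,
        Polynomial.eval_X, Polynomial.eval_C]
      linear_combination h) α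
  obtain ⟨Q, hQ⟩ := main_lemma (fun i => if Odd i then (i:ℚ) else 0)
    (Polynomial.C (1/2 : ℚ) * Polynomial.X^2)
    (fun n => by
      have h := base_odd n
      simp only [Polynomial.eval_mul, Polynomial.eval_pow,
        Polynomial.eval_X, Polynomial.eval_C]
      linear_combination h) α
  refine ⟨P, Q, fun n => ⟨?_, ?_⟩⟩
  · have hs : ∑ i ∈ (Finset.range (n + 1)).filter (fun i => Even i),
        (i : ℚ) ^ (2 * α + 1) * (Nat.choose (2 * n) (n - i) : ℚ)
        = ∑ i ∈ range (n+1), (i:ℚ)^(2*α) * (if Even i then (i:ℚ) else 0) * cc (2*n) ((n:ℤ)-i) := by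
      rw [Finset.sum_filter]
      refine Finset.sum_congr rfl (fun i hi => ?_)
      have hi' : i ≤ n := by
        have := Finset.mem_range.mp hi; omega
      have hcc : cc (2*n) ((n:ℤ)-(i:ℤ)) = (Nat.choose (2*n) (n-i) : ℚ) := by
        rw [show ((n:ℤ)-(i:ℤ)) = ((n-i:ℕ):ℤ) from by push_cast [Nat.cast_sub hi']; ring, cc_natCast]
      by_cases he : Even i
      · rw [if_pos he, if_pos he, hcc, pow_succ]
      · rw [if_neg he, if_neg he]; ring
    rw [hs]
    exact hP n
  · have hs : ∑ i ∈ (Finset.range (n + 1)).filter (fun i => Odd i),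
        (i : ℚ) ^ (2 * α + 1) * (Nat.choose (2 * n) (n - i) : ℚ)
        = ∑ i ∈ range (n+1), (i:ℚ)^(2*α) * (if Odd i then (i:ℚ) else 0) * cc (2*n) ((n:ℤ)-i) := by
      rw [Finset.sum_filter]
      refine Finset.sum_congr rfl (fun i hi => ?_)
      have hi' : i ≤ n := by
        have := Finset.mem_range.mp hi; omega
      have hcc : cc (2*n) ((n:ℤ)-(i:ℤ)) = (Nat.choose (2*n) (n-i) : ℚ) := by
        rw [show ((n:ℤ)-(i:ℤ)) = ((n-i:ℕ):ℤ) from by push_cast [Nat.cast_sub hi']; ring, cc_natCast]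
      by_cases he : Odd i
      · rw [if_pos he, if_pos he, hcc, pow_succ]
      · rw [if_neg he, if_neg he]; ring
    rw [hs]
    exact hQ n
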